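/- Let X be a locally compact Hausdorff space and U ⊆ X an open set. The ideal C₀(U) of C₀(X) is a regular ideal (i.e., equals its double annihilator) if and only if U is a regular open set in X. -/

import Mathlib

open ZeroAtInfty

/-- Two-sided annihilator of a subset of an algebra. -/
def ann {A : Type*} [NonUnitalNonAssocSemiring A] (X : Set A) : Set A :=
  {a | ∀ x ∈ X, a * x = 0 ∧ x * a = 0}

open Set in
/-- A bump function in `C₀(X, ℂ)` supported in an open set, equal to `1` at a given point. -/
lemma exists_bump {X : Type*} [TopologicalSpace X] [LocallyCompactSpace X] [T2Space X]
    {U : Set X} (hU : IsOpen U) {x : X} (hx : x ∈ U) :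
    ∃ f : C₀(X, ℂ), (∀ y ∉ U, f y = 0) ∧ f x = 1 := by
  obtain ⟨g, hg1, hg0, hgc, -⟩ := exists_continuous_one_zero_of_isCompact
    (isCompact_singleton (x := x)) hU.isClosed_compl (by simpa using hx)
  refine ⟨⟨⟨fun y => (g y : ℂ), by continuity⟩, ?_⟩, fun y hy => ?_, ?_⟩
  · have := hgc.is_zero_at_infty
    have h2 := (Complex.continuous_ofReal.tendsto 0).comp this
    simpa [Function.comp_def] using h2
  · simp [hg0 hy]
  · simp [hg1 (mem_singleton x)]

open Set in
/-- The annihilator of `C₀(V)` is `C₀((closure V)ᶜ)`. -/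
lemma ann_eq {X : Type*} [TopologicalSpace X] [LocallyCompactSpace X] [T2Space X]
    {V : Set X} (hV : IsOpen V) :
    ann {f : C₀(X, ℂ) | ∀ x ∉ V, f x = 0} =
      {f : C₀(X, ℂ) | ∀ x ∉ (closure V)ᶜ, f x = 0} := by
  ext a
  constructor
  · intro ha x hx
    simp only [mem_compl_iff, not_not] at hx
    have hz : ∀ y ∈ V, a y = 0 := by
      intro y hy
      obtain ⟨f, hf0, hf1⟩ := exists_bump hV hy
      have := (ha f hf0).1
      have := congrArg (fun g : C₀(X, ℂ) => g y) this
      simpa [hf1] using this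
    have : closure V ⊆ {y | a y = 0} :=
      closure_minimal hz (isClosed_eq (map_continuous a) continuous_const)
    exact this hx
  · intro ha f hf
    have key : (a : C₀(X, ℂ)) * f = 0 ∧ f * a = 0 := by
      constructor <;> ext y <;>
      · by_cases hy : y ∈ closure V
        · simp [ha y (by simpa using hy)]
        · simp [hf y (fun h => hy (subset_closure h))]
    exact key

/-- For a locally compact Hausdorff space `X` and an open set `U ⊆ X`, the ideal
`C₀(U)` of `C₀(X)` equals its double annihilator if and only if `U` is a regular open set. -/
theorem cZero_regularIdeal_iff {X : Type*} [TopologicalSpace X] [LocallyCompactSpace X]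
    [T2Space X] (U : Set X) (hU : IsOpen U) :
    ({f : C₀(X, ℂ) | ∀ x ∉ U, f x = 0} =
      ann (ann {f : C₀(X, ℂ) | ∀ x ∉ U, f x = 0})) ↔ U = interior (closure U) := by
  have hW : (closure ((closure U)ᶜ))ᶜ = interior (closure U) := by
    rw [closure_compl, compl_compl]
  have hdouble : ann (ann {f : C₀(X, ℂ) | ∀ x ∉ U, f x = 0}) =
      {f : C₀(X, ℂ) | ∀ x ∉ interior (closure U), f x = 0} := by
    rw [ann_eq hU, ann_eq isClosed_closure.isOpen_compl, hW]
  rw [hdouble]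
  constructor
  · intro h
    refine subset_antisymm (interior_maximal subset_closure hU) ?_
    intro x hx
    by_contra hxU
    obtain ⟨f, hf0, hf1⟩ := exists_bump isOpen_interior hx
    have : f ∈ {f : C₀(X, ℂ) | ∀ x ∉ U, f x = 0} := h ▸ hf0
    exact one_ne_zero (hf1 ▸ this x hxU)
  · intro h
    rw [← h]
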